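/- Let p ∈ [1,∞] be fixed and let 𝒞 be a compact set of n×n stochastic matrices each of which satisfies |M|_p < 1 for the metric consensus seminorm, and set λ = max_{M ∈ 𝒞} |M|_p. Then for every infinite sequence M₁, M₂, … of matrices from 𝒞, the product M_i M_{i−1} ⋯ M₁ converges as i → ∞ to a rank-one matrix of the form 𝟏c for some row vector c, and convergence occurs as fast as λ^i converges to zero: there is a constant K such that ‖M_i M_{i−1} ⋯ M₁ − 𝟏c‖ ≤ K·λ^i for all i ≥ 1. -/

import Mathlib

open Matrix Finset
open scoped ENNReal

noncomputable def matPNorm (p : ℝ≥0∞) [Fact (1 ≤ p)] {n m : ℕ}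
    (M : Matrix (Fin n) (Fin m) ℝ) : ℝ :=
  ‖LinearMap.toContinuousLinearMap
    (Matrix.toLin (PiLp.basisFun p ℝ (Fin m)) (PiLp.basisFun p ℝ (Fin n)) M)‖

noncomputable def metricSN (p : ℝ≥0∞) [Fact (1 ≤ p)] {n m : ℕ}
    (M : Matrix (Fin n) (Fin m) ℝ) : ℝ :=
  ⨅ c : Fin m → ℝ, matPNorm p (M - Matrix.of fun _ j => c j)

noncomputable def vecSN (p : ℝ≥0∞) [Fact (1 ≤ p)] {m : ℕ} (x : Fin m → ℝ) : ℝ :=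
  ⨅ c : ℝ, ‖(WithLp.equiv p (Fin m → ℝ)).symm (x - fun _ => c)‖

noncomputable def inducedSN (p : ℝ≥0∞) [Fact (1 ≤ p)] {n m : ℕ}
    (M : Matrix (Fin n) (Fin m) ℝ) : ℝ :=
  sSup {r | ∃ x : Fin m → ℝ, vecSN p x = 1 ∧ r = vecSN p (M.mulVec x)}

noncomputable def coeErg {n : ℕ} (M : Matrix (Fin n) (Fin n) ℝ) : ℝ :=
  (1 / 2) * ⨆ i : Fin n, ⨆ j : Fin n, ∑ k, |M i k - M j k|

def IsStochastic {n : ℕ} (S : Matrix (Fin n) (Fin n) ℝ) : Prop :=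
  (∀ i j, 0 ≤ S i j) ∧ ∀ i, ∑ j, S i j = 1

def IsScrambling {n : ℕ} (S : Matrix (Fin n) (Fin n) ℝ) : Prop :=
  IsStochastic S ∧ ∀ i j, ∃ k, 0 < S i k ∧ 0 < S j k

def EqRowSum (n m : ℕ) : Submodule ℝ (Matrix (Fin n) (Fin m) ℝ) where
  carrier := {M | ∀ i i', ∑ j, M i j = ∑ j, M i' j}
  add_mem' := by
    intro A B hA hB i i'
    simp only [Matrix.add_apply, Finset.sum_add_distrib, hA i i', hB i i']
  zero_mem' := by intro i i'; simp
  smul_mem' := by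
    intro c A hA i i'
    simp only [Matrix.smul_apply, smul_eq_mul, ← Finset.mul_sum, hA i i']

noncomputable def prodSeq {n : ℕ} (M : ℕ → Matrix (Fin n) (Fin n) ℝ) :
    ℕ → Matrix (Fin n) (Fin n) ℝ
  | 0 => 1
  | (i + 1) => M i * prodSeq M i

noncomputable def EE (p : ℝ≥0∞) [Fact (1 ≤ p)] (n : ℕ) :
    Matrix (Fin n) (Fin n) ℝ →ₗ[ℝ]
      ((PiLp p fun _ : Fin n => ℝ) →L[ℝ] PiLp p fun _ : Fin n => ℝ) :=
  (LinearMap.toContinuousLinearMap.toLinearMap).comp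
    (Matrix.toLin (PiLp.basisFun p ℝ (Fin n)) (PiLp.basisFun p ℝ (Fin n))).toLinearMap

def rowConst {n : ℕ} (c : Fin n → ℝ) : Matrix (Fin n) (Fin n) ℝ :=
  Matrix.of fun _ j => c j

section
variable (p : ℝ≥0∞) [Fact (1 ≤ p)] {n : ℕ}

lemma matPNorm_eq (M : Matrix (Fin n) (Fin n) ℝ) :
    matPNorm p M = ‖EE p n M‖ := rfl

lemma EE_mul (A B : Matrix (Fin n) (Fin n) ℝ) :
    EE p n (A * B) = (EE p n A).comp (EE p n B) := by
  ext x
  simp [EE, Matrix.toLin_mul (PiLp.basisFun p ℝ (Fin n)) (PiLp.basisFun p ℝ (Fin n))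
    (PiLp.basisFun p ℝ (Fin n)) A B]

lemma matPNorm_mul_le (A B : Matrix (Fin n) (Fin n) ℝ) :
    matPNorm p (A * B) ≤ matPNorm p A * matPNorm p B := by
  rw [matPNorm_eq, matPNorm_eq, matPNorm_eq, EE_mul]
  exact ContinuousLinearMap.opNorm_comp_le _ _

lemma matPNorm_eq_zero {M : Matrix (Fin n) (Fin n) ℝ}
    (h : matPNorm p M = 0) : M = 0 := by
  rw [matPNorm_eq] at h
  have h2 : EE p n M = 0 := norm_eq_zero.mp h
  have h3 : LinearMap.toContinuousLinearMap
      (Matrix.toLin (PiLp.basisFun p ℝ (Fin n)) (PiLp.basisFun p ℝ (Fin n)) M) = 0 := h2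
  have h4 := (LinearEquiv.map_eq_zero_iff LinearMap.toContinuousLinearMap).mp h3
  exact (LinearEquiv.map_eq_zero_iff (Matrix.toLin _ _)).mp h4

lemma matPNorm_nonneg (M : Matrix (Fin n) (Fin n) ℝ) : 0 ≤ matPNorm p M :=
  norm_nonneg _

lemma matPNorm_sub_comm (A B : Matrix (Fin n) (Fin n) ℝ) :
    matPNorm p (A - B) = matPNorm p (B - A) := by
  rw [matPNorm_eq, matPNorm_eq, map_sub, map_sub, norm_sub_rev]

lemma metricSN_eq (M : Matrix (Fin n) (Fin n) ℝ) :
    metricSN p M = ⨅ c : Fin n → ℝ, matPNorm p (M - rowConst c) := rfl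

lemma metricSN_nonneg (M : Matrix (Fin n) (Fin n) ℝ) : 0 ≤ metricSN p M :=
  Real.iInf_nonneg fun _ => norm_nonneg _

lemma metricSN_bddBelow (M : Matrix (Fin n) (Fin n) ℝ) :
    BddBelow (Set.range fun c : Fin n → ℝ => matPNorm p (M - rowConst c)) :=
  ⟨0, by rintro x ⟨c, rfl⟩; exact norm_nonneg _⟩

lemma metricSN_le (M : Matrix (Fin n) (Fin n) ℝ) (c : Fin n → ℝ) :
    metricSN p M ≤ matPNorm p (M - rowConst c) :=
  ciInf_le (metricSN_bddBelow p M) c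

lemma IsStochastic.mul' {A B : Matrix (Fin n) (Fin n) ℝ}
    (hA : IsStochastic A) (hB : IsStochastic B) : IsStochastic (A * B) := by
  constructor
  · intro i j
    rw [Matrix.mul_apply]
    exact Finset.sum_nonneg fun k _ => mul_nonneg (hA.1 i k) (hB.1 k j)
  · intro i
    simp only [Matrix.mul_apply]
    rw [Finset.sum_comm]
    simp_rw [← Finset.mul_sum, hB.2, mul_one]
    exact hA.2 i

lemma isStochastic_one : IsStochastic (1 : Matrix (Fin n) (Fin n) ℝ) := by
  constructor
  · intro i j
    by_cases h : i = j <;> simp [Matrix.one_apply, h]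
  · intro i
    simp [Matrix.one_apply]

lemma stoch_mul_rowConst {Q : Matrix (Fin n) (Fin n) ℝ} (hQ : IsStochastic Q)
    (c : Fin n → ℝ) : Q * rowConst c = rowConst c := by
  ext i j
  simp [rowConst, Matrix.mul_apply, ← Finset.sum_mul, hQ.2 i]

end
section
variable (p : ℝ≥0∞) [Fact (1 ≤ p)] {n : ℕ}

lemma key_identity {A : Matrix (Fin n) (Fin n) ℝ} (B : Matrix (Fin n) (Fin n) ℝ)
    (hA : IsStochastic A) (d c : Fin n → ℝ) :
    (A - rowConst d) * (B - rowConst c) =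
      A * B - rowConst (fun j => c j + (∑ k, d k * B k j) - (∑ k, d k) * c j) := by
  ext i j
  simp only [Matrix.sub_apply, Matrix.mul_apply, rowConst, Matrix.of_apply, sub_mul, mul_sub,
    Finset.sum_sub_distrib]
  rw [← Finset.sum_mul, ← Finset.sum_mul, hA.2 i]
  ring

lemma metricSN_mul_le {A : Matrix (Fin n) (Fin n) ℝ} (B : Matrix (Fin n) (Fin n) ℝ)
    (hA : IsStochastic A) :
    metricSN p (A * B) ≤ metricSN p A * metricSN p B := by
  have step : ∀ d : Fin n → ℝ,
      metricSN p (A * B) ≤ matPNorm p (A - rowConst d) * metricSN p B := by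
    intro d
    rw [metricSN_eq p B, Real.mul_iInf_of_nonneg (matPNorm_nonneg p _)]
    refine le_ciInf fun c => ?_
    calc metricSN p (A * B)
        ≤ matPNorm p (A * B - rowConst
            (fun j => c j + (∑ k, d k * B k j) - (∑ k, d k) * c j)) := metricSN_le p _ _
      _ = matPNorm p ((A - rowConst d) * (B - rowConst c)) := by
          rw [key_identity B hA d c]
      _ ≤ matPNorm p (A - rowConst d) * matPNorm p (B - rowConst c) := matPNorm_mul_le p _ _
  rw [metricSN_eq p A, Real.iInf_mul_of_nonneg (metricSN_nonneg p B)]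
  exact le_ciInf step

lemma sub_one_mul_bound {Q : Matrix (Fin n) (Fin n) ℝ} (P : Matrix (Fin n) (Fin n) ℝ)
    (hQ : IsStochastic Q) :
    matPNorm p ((Q - 1) * P) ≤ matPNorm p (Q - 1) * metricSN p P := by
  rw [metricSN_eq p P, Real.mul_iInf_of_nonneg (matPNorm_nonneg p _)]
  refine le_ciInf fun c => ?_
  have h0 : (Q - 1) * rowConst c = 0 := by
    rw [Matrix.sub_mul, stoch_mul_rowConst hQ, Matrix.one_mul, sub_self]
  have h1 : (Q - 1) * P = (Q - 1) * (P - rowConst c) := by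
    rw [Matrix.mul_sub, h0, sub_zero]
  rw [h1]
  exact matPNorm_mul_le p _ _

lemma metricSN_lipschitz (A B : Matrix (Fin n) (Fin n) ℝ) :
    metricSN p A ≤ metricSN p B + matPNorm p (A - B) := by
  have : ∀ c : Fin n → ℝ,
      metricSN p A - matPNorm p (A - B) ≤ matPNorm p (B - rowConst c) := by
    intro c
    rw [sub_le_iff_le_add]
    calc metricSN p A ≤ matPNorm p (A - rowConst c) := metricSN_le p A c
      _ = ‖EE p n (B - rowConst c) + EE p n (A - B)‖ := by
          rw [matPNorm_eq, ← map_add]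
          congr 1
          abel_nf
      _ ≤ matPNorm p (B - rowConst c) + matPNorm p (A - B) := by
          rw [matPNorm_eq, matPNorm_eq]; exact norm_add_le _ _
  have h2 := le_ciInf this
  rw [← metricSN_eq] at h2
  linarith

end
section
variable (p : ℝ≥0∞) [Fact (1 ≤ p)] {n : ℕ}

lemma matPNorm_le_sum (M : Matrix (Fin n) (Fin n) ℝ) :
    matPNorm p M ≤ ∑ i : Fin n, ∑ j : Fin n,
      |M i j| * matPNorm p (Matrix.single i j (1:ℝ)) := by
  conv_lhs => rw [Matrix.matrix_eq_sum_single M]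
  rw [matPNorm_eq, map_sum]
  refine (norm_sum_le _ _).trans (Finset.sum_le_sum fun i _ => ?_)
  rw [map_sum]
  refine (norm_sum_le _ _).trans (Finset.sum_le_sum fun j _ => ?_)
  have : Matrix.single i j (M i j) = (M i j) • Matrix.single i j (1:ℝ) := by
    rw [Matrix.smul_single, smul_eq_mul, mul_one]
  rw [this, _root_.map_smul]
  rw [matPNorm_eq]
  have hns := norm_smul (M i j) ((EE p n) (Matrix.single i j (1:ℝ)))
  rw [Real.norm_eq_abs] at hns
  exact le_of_eq hns

lemma stoch_entry_le_one {Q : Matrix (Fin n) (Fin n) ℝ} (hQ : IsStochastic Q)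
    (i j : Fin n) : Q i j ≤ 1 := by
  rw [← hQ.2 i]
  exact Finset.single_le_sum (fun k _ => hQ.1 i k) (Finset.mem_univ j)

lemma stoch_sub_one_bound {Q : Matrix (Fin n) (Fin n) ℝ} (hQ : IsStochastic Q) :
    matPNorm p (Q - 1) ≤ ∑ i : Fin n, ∑ j : Fin n,
      matPNorm p (Matrix.single i j (1:ℝ)) := by
  refine (matPNorm_le_sum p _).trans (Finset.sum_le_sum fun i _ =>
    Finset.sum_le_sum fun j _ => ?_)
  have habs : |(Q - 1) i j| ≤ 1 := by
    rw [Matrix.sub_apply, abs_le]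
    constructor
    · have := stoch_entry_le_one hQ i j
      have h1 : (1 : Matrix (Fin n) (Fin n) ℝ) i j ≤ 1 := by
        by_cases h : i = j <;> simp [Matrix.one_apply, h]
      nlinarith [hQ.1 i j]
    · have h1 : (0:ℝ) ≤ (1 : Matrix (Fin n) (Fin n) ℝ) i j := by
        by_cases h : i = j <;> simp [Matrix.one_apply, h]
      have := stoch_entry_le_one hQ i j
      linarith
  nlinarith [matPNorm_nonneg p (Matrix.single i j (1:ℝ)), abs_nonneg ((Q-1) i j)]

lemma continuous_matPNorm : Continuous fun M : Matrix (Fin n) (Fin n) ℝ => matPNorm p M := by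
  have hE : Continuous (EE p n) := (EE p n).continuous_of_finiteDimensional
  simpa [matPNorm_eq] using hE.norm

lemma continuous_metricSN : Continuous fun M : Matrix (Fin n) (Fin n) ℝ => metricSN p M := by
  rw [continuous_iff_continuousAt]
  intro B
  have hc : Continuous fun A : Matrix (Fin n) (Fin n) ℝ => matPNorm p (A - B) :=
    (continuous_matPNorm p).comp (continuous_id.sub continuous_const)
  have h0 : Filter.Tendsto (fun A : Matrix (Fin n) (Fin n) ℝ => matPNorm p (A - B)) (nhds B)
      (nhds 0) := by
    have h := hc.tendsto B
    have hz : matPNorm p (B - B) = 0 := by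
      rw [sub_self, matPNorm_eq, map_zero, norm_zero]
    rwa [hz] at h
  rw [ContinuousAt, tendsto_iff_dist_tendsto_zero]
  refine squeeze_zero (fun A => dist_nonneg) (fun A => ?_) h0
  rw [Real.dist_eq, abs_sub_le_iff]
  constructor
  · linarith [metricSN_lipschitz p A B]
  · linarith [metricSN_lipschitz p B A, (matPNorm_sub_comm p A B)]

end
def rowConstLM (n : ℕ) : (Fin n → ℝ) →ₗ[ℝ] Matrix (Fin n) (Fin n) ℝ where
  toFun := rowConst
  map_add' a b := by ext i j; simp [rowConst]
  map_smul' a b := by ext i j; simp [rowConst]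

noncomputable def rowConstL (p : ℝ≥0∞) [Fact (1 ≤ p)] (n : ℕ) :
    (Fin n → ℝ) →ₗ[ℝ]
      ((PiLp p fun _ : Fin n => ℝ) →L[ℝ] PiLp p fun _ : Fin n => ℝ) :=
  (EE p n).comp (rowConstLM n)

lemma rowConstL_apply (p : ℝ≥0∞) [Fact (1 ≤ p)] {n : ℕ} (c : Fin n → ℝ) :
    rowConstL p n c = EE p n (rowConst c) := rfl

/-- Let p ∈ [1,∞] and let 𝒞 be a compact set of n×n stochastic
matrices with |M|_p < 1 for each M ∈ 𝒞 (metric consensus seminorm), and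
λ = max_{M ∈ 𝒞} |M|_p. For every infinite sequence of matrices from 𝒞, the product
M_i⋯M₁ converges to a rank-one matrix 𝟏c as fast as λ^i → 0: there is K with
‖M_i⋯M₁ − 𝟏c‖ ≤ K·λ^i for all i ≥ 1. -/
theorem metricSN_contraction_convergence (n : ℕ) (p : ℝ≥0∞) [Fact (1 ≤ p)]
    (C : Set (Matrix (Fin n) (Fin n) ℝ)) (hC : IsCompact C)
    (hstoch : ∀ M ∈ C, IsStochastic M)
    (hcontr : ∀ M ∈ C, metricSN p M < 1) :
    ∀ Mseq : ℕ → Matrix (Fin n) (Fin n) ℝ, (∀ i, Mseq i ∈ C) →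
      ∃ c : Fin n → ℝ, ∃ K : ℝ,
        Filter.Tendsto
          (fun i => matPNorm p (prodSeq Mseq i - Matrix.of fun _ j => c j))
          Filter.atTop (nhds 0) ∧
        ∀ i : ℕ, 1 ≤ i →
          matPNorm p (prodSeq Mseq i - Matrix.of fun _ j => c j)
            ≤ K * (sSup ((fun M => metricSN p M) '' C)) ^ i := by
  intro Mseq hMseq
  set lam := sSup ((fun M => metricSN p M) '' C) with hlam
  have hCne : C.Nonempty := ⟨Mseq 0, hMseq 0⟩
  have himg : IsCompact ((fun M => metricSN p M) '' C) :=
    hC.image (continuous_metricSN p)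
  have himgne : ((fun M => metricSN p M) '' C).Nonempty := hCne.image _
  have hbdd : BddAbove ((fun M => metricSN p M) '' C) := himg.bddAbove
  have hle : ∀ M ∈ C, metricSN p M ≤ lam := fun M hM => le_csSup hbdd ⟨M, hM, rfl⟩
  obtain ⟨M₀, hM₀, hM₀eq⟩ := himg.sSup_mem himgne
  have hlam1 : lam < 1 := by rw [hlam, ← hM₀eq]; exact hcontr M₀ hM₀
  have hlam0 : 0 ≤ lam := by rw [hlam, ← hM₀eq]; exact metricSN_nonneg p M₀
  -- products are stochastic
  have hPstoch : ∀ i, IsStochastic (prodSeq Mseq i) := by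
    intro i; induction i with
    | zero => exact isStochastic_one
    | succ i ih => exact (hstoch _ (hMseq i)).mul' ih
  -- geometric bound on the seminorm of products
  have hSN : ∀ i : ℕ, 1 ≤ i → metricSN p (prodSeq Mseq i) ≤ lam ^ i := by
    intro i hi
    induction i with
    | zero => omega
    | succ i ih =>
      rcases Nat.eq_zero_or_pos i with h0 | hpos
      · subst h0
        show metricSN p (Mseq 0 * prodSeq Mseq 0) ≤ lam ^ 1
        rw [show prodSeq Mseq 0 = 1 from rfl, mul_one, pow_one]
        exact hle _ (hMseq 0)
      · have hih := ih hpos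
        calc metricSN p (prodSeq Mseq (i + 1))
            = metricSN p (Mseq i * prodSeq Mseq i) := rfl
          _ ≤ metricSN p (Mseq i) * metricSN p (prodSeq Mseq i) :=
              metricSN_mul_le p _ (hstoch _ (hMseq i))
          _ ≤ lam * lam ^ i := by
              refine mul_le_mul (hle _ (hMseq i)) hih (metricSN_nonneg p _) hlam0
          _ = lam ^ (i + 1) := by ring
  -- the constant B
  set B := ∑ i : Fin n, ∑ j : Fin n, matPNorm p (Matrix.single i j (1:ℝ)) with hBdef
  have hB0 : 0 ≤ B :=
    Finset.sum_nonneg fun i _ => Finset.sum_nonneg fun j _ => matPNorm_nonneg p _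
  -- factorization of later products
  have hfac : ∀ i k : ℕ, ∃ Q, IsStochastic Q ∧
      prodSeq Mseq (i + k) = Q * prodSeq Mseq i := by
    intro i k
    induction k with
    | zero => exact ⟨1, isStochastic_one, (Matrix.one_mul _).symm⟩
    | succ k ih =>
      obtain ⟨Q, hQ, hQe⟩ := ih
      refine ⟨Mseq (i + k) * Q, (hstoch _ (hMseq (i + k))).mul' hQ, ?_⟩
      show prodSeq Mseq ((i + k) + 1) = Mseq (i + k) * Q * prodSeq Mseq i
      rw [show prodSeq Mseq ((i + k) + 1) = Mseq (i + k) * prodSeq Mseq (i + k) from rfl,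
        hQe, Matrix.mul_assoc]
  -- difference bound
  have hdiff : ∀ i k : ℕ, matPNorm p (prodSeq Mseq (i + k) - prodSeq Mseq i)
      ≤ B * metricSN p (prodSeq Mseq i) := by
    intro i k
    obtain ⟨Q, hQ, hQe⟩ := hfac i k
    have he : prodSeq Mseq (i + k) - prodSeq Mseq i = (Q - 1) * prodSeq Mseq i := by
      rw [hQe, Matrix.sub_mul, Matrix.one_mul]
    rw [he]
    exact (sub_one_mul_bound p _ hQ).trans
      (mul_le_mul_of_nonneg_right (stoch_sub_one_bound p hQ) (metricSN_nonneg p _))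
  -- the sequence in the operator space
  set f : ℕ → ((PiLp p fun _ : Fin n => ℝ) →L[ℝ] PiLp p fun _ : Fin n => ℝ) :=
    fun i => EE p n (prodSeq Mseq i) with hf
  have hfd : ∀ i k : ℕ, ‖f (i + k) - f i‖
      ≤ B * metricSN p (prodSeq Mseq i) := by
    intro i k
    have : f (i + k) - f i = EE p n (prodSeq Mseq (i + k) - prodSeq Mseq i) := by
      rw [map_sub]
    rw [this, ← matPNorm_eq]
    exact hdiff i k
  -- Cauchy
  set D := B * (metricSN p (prodSeq Mseq 0) + 1) with hD
  have hDdist : ∀ i : ℕ, dist (f i) (f (i + 1)) ≤ D * lam ^ i := by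
    intro i
    rw [dist_eq_norm, norm_sub_rev, show i + 1 = i + 1 from rfl]
    rcases Nat.eq_zero_or_pos i with h0 | hpos
    · subst h0
      have := hfd 0 1
      have hmn := metricSN_nonneg p (prodSeq Mseq 0)
      calc ‖f (0 + 1) - f 0‖ ≤ B * metricSN p (prodSeq Mseq 0) := hfd 0 1
        _ ≤ D * lam ^ 0 := by rw [pow_zero, mul_one, hD]; nlinarith
    · have h1 := (hfd i 1).trans
        (mul_le_mul_of_nonneg_left (hSN i hpos) hB0)
      have hmn := metricSN_nonneg p (prodSeq Mseq 0)
      have hpow : (0:ℝ) ≤ lam ^ i := pow_nonneg hlam0 i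
      calc ‖f (i + 1) - f i‖ ≤ B * lam ^ i := h1
        _ ≤ D * lam ^ i := by
            rw [hD]; nlinarith [mul_nonneg (mul_nonneg hB0 hmn) hpow]
  have hcauchy : CauchySeq f := cauchySeq_of_le_geometric lam D hlam1 hDdist
  obtain ⟨L, hL⟩ := cauchySeq_tendsto_of_complete hcauchy
  -- bound on distance to the limit
  have hfL : ∀ i : ℕ, 1 ≤ i → ‖f i - L‖ ≤ B * lam ^ i := by
    intro i hi
    have htail : Filter.Tendsto (fun k => f (k + i)) Filter.atTop (nhds L) :=
      hL.comp (Filter.tendsto_add_atTop_nat i)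
    have hnorm : Filter.Tendsto (fun k => ‖f i - f (k + i)‖) Filter.atTop
        (nhds ‖f i - L‖) := (Filter.Tendsto.const_sub (f i) htail).norm
    refine le_of_tendsto hnorm (Filter.Eventually.of_forall fun k => ?_)
    rw [norm_sub_rev, show k + i = i + k from Nat.add_comm k i]
    exact (hfd i k).trans (mul_le_mul_of_nonneg_left (hSN i hi) hB0)
  -- the limit lies in the range of rowConstL
  set S : Submodule ℝ ((PiLp p fun _ : Fin n => ℝ) →L[ℝ] PiLp p fun _ : Fin n => ℝ) :=
    LinearMap.range (rowConstL p n) with hS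
  have hSclosed : IsClosed (S : Set ((PiLp p fun _ : Fin n => ℝ) →L[ℝ] PiLp p fun _ : Fin n => ℝ)) := S.closed_of_finiteDimensional
  have hinfd : ∀ i : ℕ, Metric.infDist (f i) (S : Set _) ≤ metricSN p (prodSeq Mseq i) := by
    intro i
    rw [metricSN_eq]
    refine le_ciInf fun c => ?_
    have hmem : rowConstL p n c ∈ (S : Set _) := ⟨c, rfl⟩
    refine (Metric.infDist_le_dist_of_mem hmem).trans (le_of_eq ?_)
    rw [dist_eq_norm, matPNorm_eq, map_sub, rowConstL_apply]
  have hLS : L ∈ (S : Set _) := by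
    rw [hSclosed.mem_iff_infDist_zero ⟨0, S.zero_mem⟩]
    refine le_antisymm ?_ Metric.infDist_nonneg
    have hseq : Filter.Tendsto (fun i : ℕ => (1 + B) * lam ^ i) Filter.atTop (nhds 0) := by
      have := tendsto_pow_atTop_nhds_zero_of_lt_one hlam0 hlam1
      simpa using this.const_mul (1 + B)
    refine ge_of_tendsto hseq ?_
    filter_upwards [Filter.eventually_ge_atTop 1] with i hi
    calc Metric.infDist L (S : Set _)
        ≤ Metric.infDist (f i) (S : Set _) + dist L (f i) :=
          Metric.infDist_le_infDist_add_dist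
      _ ≤ lam ^ i + B * lam ^ i := by
          refine add_le_add ((hinfd i).trans (hSN i hi)) ?_
          rw [dist_comm, dist_eq_norm]
          exact hfL i hi
      _ = (1 + B) * lam ^ i := by ring
  obtain ⟨c, hc⟩ := hLS
  refine ⟨c, B, ?_, ?_⟩
  · -- tendsto
    have hbound : ∀ i : ℕ, 1 ≤ i →
        matPNorm p (prodSeq Mseq i - Matrix.of fun _ j => c j) ≤ B * lam ^ i := by
      intro i hi
      have : matPNorm p (prodSeq Mseq i - Matrix.of fun _ j => c j) = ‖f i - L‖ := by
        rw [matPNorm_eq, map_sub, ← hc, rowConstL_apply]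
        rfl
      rw [this]
      exact hfL i hi
    have hseq : Filter.Tendsto (fun i : ℕ => B * lam ^ i) Filter.atTop (nhds 0) := by
      have := tendsto_pow_atTop_nhds_zero_of_lt_one hlam0 hlam1
      simpa using this.const_mul B
    refine squeeze_zero' ?_ ?_ hseq
    · filter_upwards with i; exact matPNorm_nonneg p _
    · filter_upwards [Filter.eventually_ge_atTop 1] with i hi
      exact hbound i hi
  · intro i hi
    have : matPNorm p (prodSeq Mseq i - Matrix.of fun _ j => c j) = ‖f i - L‖ := by
      rw [matPNorm_eq, map_sub, ← hc, rowConstL_apply]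
      rfl
    rw [this]
    exact hfL i hi
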